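/- arXiv:2508.09052 — 4 statements merged into one kernel-verified Lean document; each statement's English description precedes it below -/
import Mathlib

section
/- Let A be a unital complex Banach algebra, X a complex vector space, z ∈ A, and V : A × A → X a symmetric bilinear map with the Jordan product property at z (i.e., a∘b = a'∘b' = z implies V(a,b) = V(a',b'), where x∘y = xy+yx). If a, b ∈ A satisfy a² = b² = 1, then V(a,a) = V(b,b). -/
open Metric

lemma exists_sqrt_aux {A : Type*} [NormedRing A] [NormedAlgebra ℂ A] [CompleteSpace A]
    (w : A) (hw : ‖w‖ < 1) : ∃ y : A, y * y = 1 + w := by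
  set r : ℝ := ‖w‖ with hr
  have hr0 : 0 ≤ r := norm_nonneg _
  set f : A → A := fun t => (2 : ℂ)⁻¹ • (t * t - w) with hf
  have hmaps : Set.MapsTo f (closedBall (0 : A) r) (closedBall (0 : A) r) := by
    intro t ht
    simp only [mem_closedBall, dist_zero_right] at ht ⊢
    have h1 : ‖f t‖ ≤ (2 : ℝ)⁻¹ * (‖t * t‖ + ‖w‖) := by
      calc ‖f t‖ = ‖(2 : ℂ)⁻¹‖ * ‖t * t - w‖ := norm_smul _ _
        _ ≤ (2 : ℝ)⁻¹ * (‖t * t‖ + ‖w‖) := by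
            rw [show ‖(2 : ℂ)⁻¹‖ = (2 : ℝ)⁻¹ by norm_num]
            gcongr
            exact norm_sub_le _ _
    have h2 : ‖t * t‖ ≤ r * r := by
      calc ‖t * t‖ ≤ ‖t‖ * ‖t‖ := norm_mul_le _ _
        _ ≤ r * r := by gcongr
    nlinarith [hw]
  have hK : ContractingWith ‖w‖₊ (hmaps.restrict f _ _) := by
    constructor
    · exact_mod_cast hw
    · apply LipschitzWith.of_dist_le_mul
      rintro ⟨t, ht⟩ ⟨s, hs⟩
      simp only [Subtype.dist_eq, Set.MapsTo.val_restrict_apply]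
      simp only [mem_closedBall, dist_zero_right] at ht hs
      have hfts : f t - f s = (2 : ℂ)⁻¹ • (t * (t - s) + (t - s) * s) := by
        simp only [hf]
        rw [← smul_sub]
        congr 1
        noncomm_ring
      rw [dist_eq_norm, hfts, norm_smul, dist_eq_norm]
      have h1 : ‖t * (t - s) + (t - s) * s‖ ≤ ‖t‖ * ‖t - s‖ + ‖t - s‖ * ‖s‖ :=
        le_trans (norm_add_le _ _) (add_le_add (norm_mul_le _ _) (norm_mul_le _ _))
      have h2 : ‖(2 : ℂ)⁻¹‖ = (2 : ℝ)⁻¹ := by norm_num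
      rw [h2]
      have h3 : (‖w‖₊ : ℝ) = ‖w‖ := rfl
      rw [h3]
      nlinarith [norm_nonneg (t - s), norm_nonneg t, norm_nonneg s]
  obtain ⟨t, -, htfix, -, -⟩ := ContractingWith.exists_fixedPoint'
    (isClosed_closedBall.isComplete) hmaps hK (x := 0)
    (by simp [mem_closedBall, hr0]) (edist_ne_top _ _)
  refine ⟨1 - t, ?_⟩
  have h2t : (2 : ℂ) • t = t * t - w := by
    have := htfix
    unfold Function.IsFixedPt at this
    rw [hf] at this
    calc (2 : ℂ) • t = (2 : ℂ) • f t := by rw [htfix]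
      _ = (2 : ℂ) • ((2 : ℂ)⁻¹ • (t * t - w)) := rfl
      _ = t * t - w := by rw [smul_smul]; norm_num
  have : (1 - t) * (1 - t) = 1 - (2 : ℂ) • t + t * t := by
    rw [two_smul]; noncomm_ring
  rw [this, h2t]
  abel

theorem stmt_4 {A X : Type*} [NormedRing A] [NormedAlgebra ℂ A] [CompleteSpace A]
    [AddCommGroup X] [Module ℂ X]
    (V : A →ₗ[ℂ] A →ₗ[ℂ] X) (z : A)
    (hsymm : ∀ a b : A, V a b = V b a)
    (hJ : ∀ a b a' b' : A, a * b + b * a = z → a' * b' + b' * a' = z →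
      V a b = V a' b')
    (a b : A) (ha : a ^ 2 = 1) (hb : b ^ 2 = 1) :
    V a a = V b b := by
  set n : ℝ := ‖z‖ + 1 with hn
  have hn1 : (1 : ℝ) ≤ n := by simp [hn, norm_nonneg]
  have hn0 : (0 : ℝ) < n := lt_of_lt_of_le one_pos hn1
  have hncz : ((n : ℂ)) ≠ 0 := by exact_mod_cast hn0.ne'
  have h2n : (2 * (n : ℂ) ^ 2) ≠ 0 := mul_ne_zero two_ne_zero (pow_ne_zero 2 hncz)
  have hnz : ‖z‖ < 2 * n ^ 2 := by nlinarith [norm_nonneg z]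
  set w : A := -((2 * (n : ℂ) ^ 2)⁻¹ • z) with hw
  have hwn : ‖w‖ < 1 := by
    rw [hw, norm_neg, norm_smul]
    have hns : ‖(2 * (n : ℂ) ^ 2)⁻¹‖ = (2 * n ^ 2)⁻¹ := by
      rw [norm_inv]
      congr 1
      rw [show (2 * (n : ℂ) ^ 2) = ((2 * n ^ 2 : ℝ) : ℂ) by push_cast; ring,
        Complex.norm_real, Real.norm_of_nonneg (by positivity)]
    rw [hns, inv_mul_lt_iff₀ (by positivity), mul_one]
    exact hnz
  obtain ⟨y₀, hy₀⟩ := exists_sqrt_aux w hwn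
  set y : A := (n : ℂ) • y₀ with hy
  have hyy : (2 : ℂ) • (y * y) = (2 * (n : ℂ) ^ 2) • (1 : A) - z := by
    have hcancel : (2 : ℂ) * ((n : ℂ) * (n : ℂ)) * (2 * (n : ℂ) ^ 2)⁻¹ = 1 := by
      rw [show (2 : ℂ) * ((n : ℂ) * (n : ℂ)) = 2 * (n : ℂ) ^ 2 by ring]
      exact mul_inv_cancel₀ h2n
    rw [hy, smul_mul_smul_comm, hy₀, hw, smul_smul, smul_add, smul_neg, smul_smul,
      hcancel, one_smul, show (2 : ℂ) * ((n : ℂ) * (n : ℂ)) = 2 * (n : ℂ) ^ 2 by ring]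
    abel
  have key : ∀ c : A, c ^ 2 = 1 →
      ((n : ℂ) • c + y) * ((n : ℂ) • c - y) + ((n : ℂ) • c - y) * ((n : ℂ) • c + y) = z := by
    intro c hc
    have expand : ((n : ℂ) • c + y) * ((n : ℂ) • c - y) + ((n : ℂ) • c - y) * ((n : ℂ) • c + y)
        = (2 * (n : ℂ) ^ 2) • (c * c) - (2 : ℂ) • (y * y) := by
      simp only [mul_add, add_mul, mul_sub, sub_mul, smul_mul_assoc, mul_smul_comm, smul_smul]
      module
    rw [expand, show c * c = c ^ 2 from (pow_two c).symm, hc, hyy]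
    abel
  have hV : ∀ c : A, V ((n : ℂ) • c + y) ((n : ℂ) • c - y)
      = ((n : ℂ) ^ 2) • V c c - V y y := by
    intro c
    simp only [map_add, map_sub, map_smul, LinearMap.add_apply, LinearMap.sub_apply,
      LinearMap.smul_apply, smul_sub, smul_smul]
    rw [hsymm c y]
    module
  have := hJ ((n : ℂ) • a + y) ((n : ℂ) • a - y) ((n : ℂ) • b + y) ((n : ℂ) • b - y)
    (key a ha) (key b hb)
  rw [hV a, hV b] at this
  have h2 : ((n : ℂ) ^ 2) • V a a = ((n : ℂ) ^ 2) • V b b := by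
    have := congrArg (fun x => x + V y y) this
    simpa using this
  have hn2 : ((n : ℂ) ^ 2) ≠ 0 := pow_ne_zero 2 hncz
  have := congrArg (fun x => ((n : ℂ) ^ 2)⁻¹ • x) h2
  simpa [smul_smul, inv_mul_cancel₀ hn2] using this
end

section
/- Let A be a unital algebra over a field of characteristic ≠ 2, X a vector space, and V : A × A → X a symmetric bilinear map such that V(a,a) = V(b,b) whenever a² = b² = 1. Suppose a ∈ A satisfies a² = 0 and there is an idempotent p ∈ A with pa = a and ap = 0. Then V(a,a) = 0. -/
theorem stmt_5 {K A X : Type*} [Field K] (h2 : (2 : K) ≠ 0)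
    [Ring A] [Algebra K A] [AddCommGroup X] [Module K X]
    (V : A →ₗ[K] A →ₗ[K] X)
    (hsymm : ∀ a b : A, V a b = V b a)
    (hsq1 : ∀ a b : A, a ^ 2 = 1 → b ^ 2 = 1 → V a a = V b b)
    (a p : A) (ha : a ^ 2 = 0) (hp : p * p = p)
    (hpa : p * a = a) (hap : a * p = 0) :
    V a a = 0 := by
  set u : A := 2 * p - 1 with hu
  have haa : a * a = 0 := by rw [← sq]; exact ha
  have hu2 : u ^ 2 = 1 := by
    have : u ^ 2 = 4 * (p * p) - 4 * p + 1 := by rw [hu]; noncomm_ring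
    rw [this, hp]; noncomm_ring
  have h1 : (u + a) ^ 2 = 1 := by
    have : (u + a) ^ 2 = 4 * (p * p) - 4 * p + 1 + (2 * (p * a) - a)
        + (2 * (a * p) - a) + a * a := by rw [hu]; noncomm_ring
    rw [this, hp, hpa, hap, haa]; noncomm_ring
  have h1' : (u - a) ^ 2 = 1 := by
    have : (u - a) ^ 2 = 4 * (p * p) - 4 * p + 1 - (2 * (p * a) - a)
        - (2 * (a * p) - a) + a * a := by rw [hu]; noncomm_ring
    rw [this, hp, hpa, hap, haa]; noncomm_ring
  have e1 := hsq1 (u + a) u h1 hu2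
  have e2 := hsq1 (u - a) u h1' hu2
  simp only [map_add, map_sub, LinearMap.add_apply, LinearMap.sub_apply] at e1 e2
  have h4 : (2 : K) • V a a = 0 := by
    have h := congrArg₂ (· + ·) e1 e2
    abel_nf at h
    have h5 := add_eq_left.mp h
    rw [two_smul] at h5 ⊢
    exact h5
  exact (smul_eq_zero.mp h4).resolve_left h2
end

section
/- There is no linear map T : M₃(ℂ) → ℂ such that tr(a)·tr(b) = T(ab + ba) for all a, b ∈ M₃(ℂ). Consequently the symmetric bilinear map V(a,b) = tr(a)tr(b) has the square-zero property (V(a,a)=0 when a²=0) but is not of the form T(a∘b). -/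
theorem stmt_7 :
    (∀ a : Matrix (Fin 3) (Fin 3) ℂ, a * a = 0 → a.trace * a.trace = 0) ∧
    ¬ ∃ T : Matrix (Fin 3) (Fin 3) ℂ →ₗ[ℂ] ℂ,
        ∀ a b : Matrix (Fin 3) (Fin 3) ℂ,
          a.trace * b.trace = T (a * b + b * a) := by
  constructor
  · intro a ha
    have hn : IsNilpotent a := ⟨2, by rw [pow_two]; exact ha⟩
    have := Matrix.isNilpotent_trace_of_isNilpotent hn
    rw [this.eq_zero]
    ring
  · rintro ⟨T, hT⟩
    set a : Matrix (Fin 3) (Fin 3) ℂ := Matrix.diagonal ![1, -1, 0] with ha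
    have hsq : a * a = Matrix.diagonal ![1, 1, 0] := by
      rw [ha, Matrix.diagonal_mul_diagonal]
      ext i j
      fin_cases i <;> fin_cases j <;> simp
    have htra : a.trace = 0 := by
      rw [ha, Matrix.trace_diagonal, Fin.sum_univ_three]
      norm_num [Matrix.cons_val_two]
    have hTd : T (Matrix.diagonal ![1, 1, 0]) = 0 := by
      have h1 := hT a a
      rw [htra, hsq, map_add] at h1
      have : T (Matrix.diagonal ![1, 1, 0]) + T (Matrix.diagonal ![1, 1, 0]) = 0 := by rw [← h1]; ring
      linear_combination this / 2
    have h2 := hT 1 (Matrix.diagonal ![1, 1, 0])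
    rw [Matrix.trace_one, Matrix.trace_diagonal, Fin.sum_univ_three] at h2
    rw [one_mul, mul_one, map_add, hTd] at h2
    norm_num [Matrix.cons_val_two] at h2
end

section
/- For every n > 1, the matrix algebra Mₙ(ℂ) is not symmetrically square-zero determined: the symmetric bilinear map V(a,b) = tr(a)tr(b) satisfies V(a,a) = 0 whenever a² = 0, yet there is no linear map T : Mₙ(ℂ) → ℂ with V(a,b) = T(ab+ba) for all a,b. -/
theorem stmt_8 (n : ℕ) (hn : 1 < n) :
    (∀ a : Matrix (Fin n) (Fin n) ℂ, a * a = 0 → a.trace * a.trace = 0) ∧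
    ¬ ∃ T : Matrix (Fin n) (Fin n) ℂ →ₗ[ℂ] ℂ,
        ∀ a b : Matrix (Fin n) (Fin n) ℂ,
          a.trace * b.trace = T (a * b + b * a) := by
  constructor
  · intro a ha
    have hnil : IsNilpotent a := ⟨2, by simpa [sq] using ha⟩
    have := Matrix.isNilpotent_trace_of_isNilpotent hnil
    have h0 : a.trace = 0 := this.eq_zero
    simp [h0]
  · rintro ⟨T, hT⟩
    have h01 : (0:ℕ) < n := by omega
    set i : Fin n := ⟨0, h01⟩
    set j : Fin n := ⟨1, hn⟩
    have h0 : i ≠ j := by simp [i, j, Fin.ext_iff]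
    set e : Matrix (Fin n) (Fin n) ℂ := Matrix.single i i 1
    set f : Matrix (Fin n) (Fin n) ℂ := Matrix.single j j 1
    have hef : e * f = 0 := Matrix.single_mul_single_of_ne (c := (1:ℂ)) i i j h0 1
    have hfe : f * e = 0 := Matrix.single_mul_single_of_ne (c := (1:ℂ)) j j i h0.symm 1
    have htre : e.trace = 1 := Matrix.trace_single_eq_same (i := i) (c := (1:ℂ))
    have htrf : f.trace = 1 := Matrix.trace_single_eq_same (i := j) (c := (1:ℂ))
    have := hT e f
    rw [htre, htrf, hef, hfe] at this
    simp at this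
end
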